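/- A nontrivial free group F has an element of positive stable commutator length; in particular the commutator [a,b] of two free generators a, b of the free group on two generators has stable commutator length 1/2 > 0, so F is not uniformly perfect on its commutator subgroup. -/

import Mathlib

open scoped commutatorElement

/-- `g` is a product of `N` commutators. -/
def IsProdOfCommutators {G : Type*} [Group G] (g : G) (N : ℕ) : Prop :=
  ∃ f : Fin N → G × G, g = (List.ofFn fun i => ⁅(f i).1, (f i).2⁆).prod

/-- The commutator length of `g`: the least `N` such that `g` is a product of
`N` commutators. -/
noncomputable def commLength {G : Type*} [Group G] (g : G) : ℕ :=
  sInf {N | IsProdOfCommutators g N}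

/-- The stable commutator length, which by Fekete's subadditivity lemma equals
the limit of `commLength (g ^ n) / n`. -/
noncomputable def scl {G : Type*} [Group G] (g : G) : ℝ :=
  ⨅ n : ℕ, (commLength (g ^ (n + 1)) : ℝ) / (n + 1)



variable {G : Type*} [Group G]

lemma abstract_step (c u d E bb x : G) (hx : x * d = d * x)
    (h1 : c ^ 2 * u = u * d ^ 2)
    (hkey : ∀ y, d * (d * (bb * y)) = d * (bb * (d⁻¹ * (E * y)))) :
    c ^ 2 * (u * (x * (bb * x⁻¹))) =
      (u * ((d * x) * (bb * (d * x)⁻¹))) * (x * (E * x⁻¹)) := by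
  have Hd : ∀ y, d * (x * y) = x * (d * y) := by
    intro y; rw [← mul_assoc, ← hx, mul_assoc]
  have Hdi : ∀ y, d⁻¹ * (x * y) = x * (d⁻¹ * y) := by
    intro y
    have h2 : d * (x * (d⁻¹ * y)) = x * y := by rw [Hd, mul_inv_cancel_left]
    rw [← h2, inv_mul_cancel_left]
  have h1' : ∀ y, c ^ 2 * (u * y) = u * (d * (d * y)) := by
    intro y
    rw [← mul_assoc, h1, pow_two]
    simp [mul_assoc]
  calc c ^ 2 * (u * (x * (bb * x⁻¹)))
      = u * (d * (d * (x * (bb * x⁻¹)))) := h1' _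
    _ = u * (x * (d * (d * (bb * x⁻¹)))) := by rw [Hd, Hd]
    _ = u * (x * (d * (bb * (d⁻¹ * (E * x⁻¹))))) := by rw [hkey]
    _ = (u * ((d * x) * (bb * (d * x)⁻¹))) * (x * (E * x⁻¹)) := by
        rw [mul_inv_rev]
        simp only [mul_assoc]
        rw [Hdi, inv_mul_cancel_left, Hd]

section Culler
variable (a b : G)

lemma comm_eq (x : G) :
    ⁅a * b * a⁻¹, x * a⁻¹⁆ = a * b * a⁻¹ * (x * (b⁻¹ * x⁻¹)) := by group

lemma concrete_step (n : ℕ) :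
    (a * b * a⁻¹ * b⁻¹) ^ 2 * ⁅a * b * a⁻¹, (b⁻¹ * a * b * a⁻¹) ^ n * a⁻¹⁆ =
      ⁅a * b * a⁻¹, (b⁻¹ * a * b * a⁻¹) ^ (n + 1) * a⁻¹⁆ *
        ((b⁻¹ * a * b * a⁻¹) ^ n * (⁅b⁻¹ * a, b ^ 2⁆ * ((b⁻¹ * a * b * a⁻¹) ^ n)⁻¹)) := by
  rw [comm_eq, comm_eq, pow_succ' (b⁻¹ * a * b * a⁻¹) n]
  exact abstract_step (a * b * a⁻¹ * b⁻¹) (a * b * a⁻¹) (b⁻¹ * a * b * a⁻¹)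
    ⁅b⁻¹ * a, b ^ 2⁆ b⁻¹ ((b⁻¹ * a * b * a⁻¹) ^ n)
    (pow_mul_comm' (b⁻¹ * a * b * a⁻¹) n) (by rw [pow_two, pow_two]; group)
    (fun y => by group)

lemma main_prod : ∀ k : ℕ,
    ⁅a, b⁆ ^ (2 * k + 1) =
      ⁅a * b * a⁻¹, (b⁻¹ * a * b * a⁻¹) ^ k * a⁻¹⁆ *
        (List.ofFn fun i : Fin k => (b⁻¹ * a * b * a⁻¹) ^ (k - 1 - (i : ℕ)) *
          (⁅b⁻¹ * a, b ^ 2⁆ * (((b⁻¹ * a * b * a⁻¹) ^ (k - 1 - (i : ℕ)))⁻¹))).prod := by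
  intro k
  induction k with
  | zero => simp only [List.ofFn_zero, List.prod_nil, mul_one, pow_zero, pow_one]; group
  | succ k ih =>
      have hpow : (2 * (k + 1) + 1) = 2 + (2 * k + 1) := by ring
      rw [hpow, pow_add, ih, ← mul_assoc, commutatorElement_def a b, concrete_step]
      rw [List.ofFn_succ]
      simp only [Fin.val_zero, Fin.val_succ, List.prod_cons]
      have harith : ∀ i : Fin k, (k + 1 - 1 - ((i : ℕ) + 1)) = k - 1 - (i : ℕ) := by
        intro i; omega
      have hlist : (List.ofFn fun i : Fin k =>
          (b⁻¹ * a * b * a⁻¹) ^ (k + 1 - 1 - ((i : ℕ) + 1)) *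
            (⁅b⁻¹ * a, b ^ 2⁆ * (((b⁻¹ * a * b * a⁻¹) ^ (k + 1 - 1 - ((i : ℕ) + 1)))⁻¹))) =
          (List.ofFn fun i : Fin k => (b⁻¹ * a * b * a⁻¹) ^ (k - 1 - (i : ℕ)) *
            (⁅b⁻¹ * a, b ^ 2⁆ * (((b⁻¹ * a * b * a⁻¹) ^ (k - 1 - (i : ℕ)))⁻¹))) := by
        congr 1; funext i; rw [harith]
      rw [show (k + 1 - 1 - (0:ℕ)) = k by omega, hlist, mul_assoc]

lemma conj_commutator (g x y : G) : g * (⁅x, y⁆ * g⁻¹) = ⁅g * x * g⁻¹, g * y * g⁻¹⁆ := by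
  group

lemma odd_pow_is_prod (k : ℕ) : IsProdOfCommutators (⁅a, b⁆ ^ (2 * k + 1)) (k + 1) := by
  refine ⟨Fin.cons (a * b * a⁻¹, (b⁻¹ * a * b * a⁻¹) ^ k * a⁻¹)
    (fun i : Fin k =>
      ((b⁻¹ * a * b * a⁻¹) ^ (k - 1 - (i : ℕ)) * (b⁻¹ * a) * (((b⁻¹ * a * b * a⁻¹) ^ (k - 1 - (i : ℕ)))⁻¹),
       (b⁻¹ * a * b * a⁻¹) ^ (k - 1 - (i : ℕ)) * b ^ 2 * (((b⁻¹ * a * b * a⁻¹) ^ (k - 1 - (i : ℕ)))⁻¹))), ?_⟩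
  rw [main_prod a b k, List.ofFn_succ]
  simp only [Fin.cons_zero, Fin.cons_succ, List.prod_cons]
  have hfun : (fun i : Fin k => (b⁻¹ * a * b * a⁻¹) ^ (k - 1 - (i : ℕ)) *
      (⁅b⁻¹ * a, b ^ 2⁆ * (((b⁻¹ * a * b * a⁻¹) ^ (k - 1 - (i : ℕ)))⁻¹))) =
      (fun i : Fin k =>
        ⁅(b⁻¹ * a * b * a⁻¹) ^ (k - 1 - (i : ℕ)) * (b⁻¹ * a) * (((b⁻¹ * a * b * a⁻¹) ^ (k - 1 - (i : ℕ)))⁻¹),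
         (b⁻¹ * a * b * a⁻¹) ^ (k - 1 - (i : ℕ)) * b ^ 2 * (((b⁻¹ * a * b * a⁻¹) ^ (k - 1 - (i : ℕ)))⁻¹)⁆) := by
    funext i
    rw [← conj_commutator]
  rw [hfun]
end Culler

open Equiv

/-- predicate: strictly monotone permutation of ℚ commuting with +1 -/
def PerPred (σ : Equiv.Perm ℚ) : Prop :=
  StrictMono (σ : ℚ → ℚ) ∧ ∀ x : ℚ, σ (x + 1) = σ x + 1

lemma PerPred.one : PerPred 1 := by
  constructor
  · exact fun x y h => h
  · intro x; rfl

lemma PerPred.mul {σ τ : Equiv.Perm ℚ} (hσ : PerPred σ) (hτ : PerPred τ) :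
    PerPred (σ * τ) := by
  constructor
  · exact fun x y h => hσ.1 (hτ.1 h)
  · intro x
    simp only [Equiv.Perm.mul_apply, hτ.2, hσ.2]

lemma PerPred.inv {σ : Equiv.Perm ℚ} (hσ : PerPred σ) : PerPred σ⁻¹ := by
  constructor
  · intro x y h
    by_contra hle
    push_neg at hle
    have := hσ.1.monotone hle
    simp only [Equiv.Perm.coe_inv, Equiv.apply_symm_apply] at this
    exact absurd this (not_le.2 h)
  · intro x
    apply hσ.1.injective
    simp only [Equiv.Perm.coe_inv, Equiv.apply_symm_apply]
    rw [hσ.2, Equiv.apply_symm_apply]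

lemma PerPred.nat {σ : Equiv.Perm ℚ} (hσ : PerPred σ) (n : ℕ) (x : ℚ) :
    σ (x + n) = σ x + n := by
  induction n with
  | zero => simp
  | succ n ih =>
      have e : (x + (n + 1 : ℕ) : ℚ) = (x + n) + 1 := by push_cast; ring
      rw [e, hσ.2, ih]
      push_cast; ring

lemma PerPred.int {σ : Equiv.Perm ℚ} (hσ : PerPred σ) (k : ℤ) (x : ℚ) :
    σ (x + k) = σ x + k := by
  obtain ⟨n, rfl | rfl⟩ := k.eq_nat_or_neg
  · have := hσ.nat n x
    push_cast
    push_cast at this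
    exact this
  · have h := hσ.nat n (x - n)
    have e : (x - n + n : ℚ) = x := by ring
    rw [e] at h
    have e2 : (x + ((-(n:ℤ)) : ℤ) : ℚ) = x - n := by push_cast; ring
    rw [e2]
    push_cast
    linarith

lemma PerPred.osc_up {σ : Equiv.Perm ℚ} (hσ : PerPred σ) {y₀ c : ℚ}
    (h : σ y₀ ≤ y₀ + c) : ∀ y, σ y < y + c + 1 := by
  intro y
  have hk1 : (y - y₀ : ℚ) ≤ ⌈y - y₀⌉ := Int.le_ceil _
  have hk2 : (⌈y - y₀⌉ : ℚ) < y - y₀ + 1 := Int.ceil_lt_add_one _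
  have h1 : σ y ≤ σ (y₀ + ⌈y - y₀⌉) := hσ.1.monotone (by linarith)
  rw [hσ.int] at h1
  linarith

lemma PerPred.osc_down {σ : Equiv.Perm ℚ} (hσ : PerPred σ) {y₀ c : ℚ}
    (h : y₀ + c ≤ σ y₀) : ∀ y, y + c - 1 < σ y := by
  intro y
  have hk1 : (⌊y - y₀⌋ : ℚ) ≤ y - y₀ := Int.floor_le _
  have hk2 : (y - y₀ : ℚ) < ⌊y - y₀⌋ + 1 := Int.lt_floor_add_one _
  have h1 : σ (y₀ + ⌊y - y₀⌋) ≤ σ y := hσ.1.monotone (by linarith)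
  rw [hσ.int] at h1
  linarith

/-- Key single-commutator bound: a commutator of periodic monotone maps moves
no point by 2 or more. -/
lemma comm_bound {f g : Equiv.Perm ℚ} (hf : PerPred f) (hg : PerPred g) :
    ∀ y, (⁅f, g⁆ : Equiv.Perm ℚ) y < y + 2 := by
  by_contra hcon
  push_neg at hcon
  obtain ⟨y₀, hy₀⟩ := hcon
  have hc : PerPred (⁅f, g⁆ : Equiv.Perm ℚ) := by
    have : (⁅f, g⁆ : Equiv.Perm ℚ) = f * g * f⁻¹ * g⁻¹ := rfl
    rw [this]
    exact ((hf.mul hg).mul hf.inv).mul hg.inv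
  have hstrong : ∀ x, x + 1 < (⁅f, g⁆ : Equiv.Perm ℚ) x := by
    intro x
    have := hc.osc_down hy₀ x
    linarith
  have hval : ∀ x, (⁅f, g⁆ : Equiv.Perm ℚ) (g x) = f (g (f⁻¹ x)) := by
    intro x
    simp [commutatorElement_def, Equiv.Perm.mul_apply]
  set u : Equiv.Perm ℚ := f * g * f⁻¹ with hu
  have huval : ∀ x, u x = f (g (f⁻¹ x)) := by
    intro x; simp [hu, Equiv.Perm.mul_apply]
  have h1 : ∀ x, g x + 1 < u x := by
    intro x
    have := hstrong (g x)
    rw [hval x] at this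
    rw [huval]
    linarith
  have h2 : ∀ x, g (g x) + 2 < u (u x) := by
    intro x
    have ha := h1 (u x)
    have hb : g (g x + 1) < g (u x) := hg.1 (h1 x)
    rw [hg.2] at hb
    linarith
  have key := h2 (f 0)
  have e1 : u (f 0) = f (g 0) := by rw [huval]; simp
  have e2 : u (f (g 0)) = f (g (g 0)) := by rw [huval]; simp
  rw [e1, e2] at key
  -- bounds
  have bf : f (g (g 0)) < g (g 0) + f 0 + 1 := hf.osc_up (y₀ := 0) (c := f 0) (by simp) (g (g 0))
  have hgg : PerPred (g * g) := hg.mul hg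
  have bg : f 0 + g (g 0) - 1 < g (g (f 0)) := by
    have := hgg.osc_down (c := g (g 0)) (y₀ := 0) (by simp [Equiv.Perm.mul_apply]) (f 0)
    simpa [Equiv.Perm.mul_apply] using this
  linarith

/-- product of K+1 commutators moves some point by less than 2(K+1) -/
lemma prod_comm_bound : ∀ (K : ℕ) (F G : Fin (K + 1) → Equiv.Perm ℚ),
    (∀ i, PerPred (F i) ∧ PerPred (G i)) →
    ∃ x : ℚ, ((List.ofFn fun i => (⁅F i, G i⁆ : Equiv.Perm ℚ)).prod) x < x + 2 * (K + 1) := by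
  intro K
  induction K with
  | zero =>
      intro F G h
      refine ⟨0, ?_⟩
      simp only [List.ofFn_succ, List.ofFn_zero, List.prod_cons, List.prod_nil, mul_one]
      have := comm_bound (h 0).1 (h 0).2 0
      norm_num at this ⊢
      exact this
  | succ K ih =>
      intro F G h
      obtain ⟨x, hx⟩ := ih (fun i => F i.succ) (fun i => G i.succ) (fun i => h i.succ)
      refine ⟨x, ?_⟩
      rw [List.ofFn_succ, List.prod_cons]
      rw [Equiv.Perm.mul_apply]
      have h2 := comm_bound (h 0).1 (h 0).2
        (((List.ofFn fun i => (⁅F i.succ, G i.succ⁆ : Equiv.Perm ℚ)).prod) x)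
      have := hx
      push_cast
      push_cast at this
      linarith

/-- Build a periodic monotone permutation of ℚ from a piecewise map on [0,1). -/
noncomputable def buildPL (F Fi : ℚ → ℚ) (c : ℚ)
    (hFrange : ∀ t, 0 ≤ t → t < 1 → c ≤ F t ∧ F t < c + 1)
    (hFirange : ∀ s, c ≤ s → s < c + 1 → 0 ≤ Fi s ∧ Fi s < 1)
    (hFiF : ∀ t, 0 ≤ t → t < 1 → Fi (F t) = t)
    (hFFi : ∀ s, c ≤ s → s < c + 1 → F (Fi s) = s) : Equiv.Perm ℚ where
  toFun x := ⌊x⌋ + F (Int.fract x)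
  invFun y := ⌊y - c⌋ + Fi (y - ⌊y - c⌋)
  left_inv := by
    intro x
    have ht0 : (0:ℚ) ≤ Int.fract x := Int.fract_nonneg x
    have ht1 : Int.fract x < 1 := Int.fract_lt_one x
    obtain ⟨hr1, hr2⟩ := hFrange _ ht0 ht1
    have hfl : ⌊(⌊x⌋ : ℚ) + F (Int.fract x) - c⌋ = ⌊x⌋ := by
      have : (⌊x⌋ : ℚ) + F (Int.fract x) - c = (F (Int.fract x) - c) + ⌊x⌋ := by ring
      rw [this, Int.floor_add_intCast, Int.floor_eq_zero_iff.2 ⟨by linarith, by linarith⟩]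
      ring
    simp only [hfl]
    have : (⌊x⌋ : ℚ) + F (Int.fract x) - ⌊x⌋ = F (Int.fract x) := by ring
    rw [this, hFiF _ ht0 ht1, Int.floor_add_fract]
  right_inv := by
    intro y
    have hs1 : c ≤ y - ⌊y - c⌋ := by
      have := Int.floor_le (y - c); linarith
    have hs2 : y - ⌊y - c⌋ < c + 1 := by
      have := Int.lt_floor_add_one (y - c); linarith
    obtain ⟨hi0, hi1⟩ := hFirange _ hs1 hs2
    have hfl : ⌊(⌊y - c⌋ : ℚ) + Fi (y - ⌊y - c⌋)⌋ = ⌊y - c⌋ := by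
      rw [add_comm, Int.floor_add_intCast, Int.floor_eq_zero_iff.2 ⟨hi0, hi1⟩]
      ring
    have hfr : Int.fract ((⌊y - c⌋ : ℚ) + Fi (y - ⌊y - c⌋)) = Fi (y - ⌊y - c⌋) := by
      rw [add_comm, Int.fract_add_intCast, Int.fract_eq_self.2 ⟨hi0, hi1⟩]
    simp only [hfl, hfr, hFFi _ hs1 hs2]
    ring

lemma buildPL_apply (F Fi : ℚ → ℚ) (c : ℚ) (h1 h2 h3 h4) (x : ℚ) :
    buildPL F Fi c h1 h2 h3 h4 x = ⌊x⌋ + F (Int.fract x) := rfl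

lemma buildPL_perPred (F Fi : ℚ → ℚ) (c : ℚ) (h1 h2 h3 h4)
    (hFmono : ∀ t u, 0 ≤ t → t < u → u < 1 → F t < F u) :
    PerPred (buildPL F Fi c h1 h2 h3 h4) := by
  constructor
  · intro x y hxy
    simp only [Equiv.coe_fn_mk, buildPL_apply]
    rcases lt_or_eq_of_le (Int.floor_le_floor hxy.le) with hf | hf
    · have b1 : F (Int.fract x) < c + 1 :=
        (h1 _ (Int.fract_nonneg x) (Int.fract_lt_one x)).2
      have b2 : c ≤ F (Int.fract y) :=
        (h1 _ (Int.fract_nonneg y) (Int.fract_lt_one y)).1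
      have : (⌊x⌋ : ℚ) + 1 ≤ ⌊y⌋ := by exact_mod_cast hf
      linarith
    · have hfr : Int.fract x < Int.fract y := by
        unfold Int.fract
        rw [hf] at *
        linarith [hxy]
      have := hFmono _ _ (Int.fract_nonneg x) hfr (Int.fract_lt_one y)
      rw [hf]
      linarith
  · intro x
    simp only [buildPL_apply]
    rw [Int.fract_add_one, Int.floor_add_one]
    push_cast
    ring
noncomputable section

def Ffun (t : ℚ) : ℚ := if t < 1/8 then 1/2 + 4*t else if t < 1/4 then 5/8 + 3*t else 4/3 + t/6
def Finv (s : ℚ) : ℚ := if s < 1 then (s - 1/2)/4 else if s < 11/8 then 1/8 + (s-1)/3 else 6*s - 8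
def Gfun (t : ℚ) : ℚ := if t < 1/2 then 1/4 + t/4 else if t < 3/4 then (5/2)*t - 7/8 else t + 1/4
def Ginv (s : ℚ) : ℚ := if s < 3/8 then 4*s - 1 else if s < 1 then (2/5)*s + 7/20 else s - 1/4

lemma Ffun_range : ∀ t : ℚ, 0 ≤ t → t < 1 → 1/2 ≤ Ffun t ∧ Ffun t < 1/2 + 1 := by
  intro t h0 h1; unfold Ffun; split_ifs <;> constructor <;> linarith

lemma Finv_range : ∀ s : ℚ, 1/2 ≤ s → s < 1/2 + 1 → 0 ≤ Finv s ∧ Finv s < 1 := by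
  intro s h0 h1; unfold Finv; split_ifs <;> constructor <;> linarith

lemma Finv_Ffun : ∀ t : ℚ, 0 ≤ t → t < 1 → Finv (Ffun t) = t := by
  intro t h0 h1; unfold Ffun Finv; split_ifs <;> linarith

lemma Ffun_Finv : ∀ s : ℚ, 1/2 ≤ s → s < 1/2 + 1 → Ffun (Finv s) = s := by
  intro s h0 h1; unfold Ffun Finv; split_ifs <;> linarith

lemma Ffun_mono : ∀ t u : ℚ, 0 ≤ t → t < u → u < 1 → Ffun t < Ffun u := by
  intro t u h0 h1 h2; unfold Ffun; split_ifs <;> linarith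

lemma Gfun_range : ∀ t : ℚ, 0 ≤ t → t < 1 → 1/4 ≤ Gfun t ∧ Gfun t < 1/4 + 1 := by
  intro t h0 h1; unfold Gfun; split_ifs <;> constructor <;> linarith

lemma Ginv_range : ∀ s : ℚ, 1/4 ≤ s → s < 1/4 + 1 → 0 ≤ Ginv s ∧ Ginv s < 1 := by
  intro s h0 h1; unfold Ginv; split_ifs <;> constructor <;> linarith

lemma Ginv_Gfun : ∀ t : ℚ, 0 ≤ t → t < 1 → Ginv (Gfun t) = t := by
  intro t h0 h1; unfold Gfun Ginv; split_ifs <;> linarith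

lemma Gfun_Ginv : ∀ s : ℚ, 1/4 ≤ s → s < 1/4 + 1 → Gfun (Ginv s) = s := by
  intro s h0 h1; unfold Gfun Ginv; split_ifs <;> linarith

lemma Gfun_mono : ∀ t u : ℚ, 0 ≤ t → t < u → u < 1 → Gfun t < Gfun u := by
  intro t u h0 h1 h2; unfold Gfun; split_ifs <;> linarith

noncomputable def fP : Equiv.Perm ℚ :=
  buildPL Ffun Finv (1/2) Ffun_range Finv_range Finv_Ffun Ffun_Finv

noncomputable def gP : Equiv.Perm ℚ :=
  buildPL Gfun Ginv (1/4) Gfun_range Ginv_range Ginv_Gfun Gfun_Ginv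

lemma fP_mem : PerPred fP := buildPL_perPred _ _ _ _ _ _ _ Ffun_mono
lemma gP_mem : PerPred gP := buildPL_perPred _ _ _ _ _ _ _ Gfun_mono

lemma unit_apply (F Fi : ℚ → ℚ) (c : ℚ) (h1 h2 h3 h4) (x : ℚ) (hx0 : 0 ≤ x) (hx1 : x < 1) :
    buildPL F Fi c h1 h2 h3 h4 x = F x := by
  rw [buildPL_apply, Int.floor_eq_zero_iff.2 ⟨hx0, hx1⟩, Int.fract_eq_self.2 ⟨hx0, hx1⟩]
  simp

lemma fP_zero : fP 0 = 1/2 := by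
  rw [fP, unit_apply _ _ _ _ _ _ _ 0 le_rfl one_pos]
  norm_num [Ffun]

lemma fP_quarter : fP (1/4) = 11/8 := by
  rw [fP, unit_apply _ _ _ _ _ _ _ (1/4) (by norm_num) (by norm_num)]
  norm_num [Ffun]

lemma gP_zero : gP 0 = 1/4 := by
  rw [gP, unit_apply _ _ _ _ _ _ _ 0 le_rfl one_pos]
  norm_num [Gfun]

lemma gP_half : gP (1/2) = 3/8 := by
  rw [gP, unit_apply _ _ _ _ _ _ _ (1/2) (by norm_num) (by norm_num)]
  norm_num [Gfun]

lemma comm_val : (⁅fP, gP⁆ : Equiv.Perm ℚ) (3/8 : ℚ) = 3/8 + 1 := by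
  have hexp : (⁅fP, gP⁆ : Equiv.Perm ℚ) (3/8 : ℚ) = fP (gP (fP⁻¹ (gP⁻¹ (3/8)))) := by
    simp [commutatorElement_def, Equiv.Perm.mul_apply]
  have h1 : gP⁻¹ ((3:ℚ)/8) = 1/2 := by
    rw [show (3:ℚ)/8 = gP (1/2) from gP_half.symm, Equiv.Perm.coe_inv, Equiv.symm_apply_apply]
  have h2 : fP⁻¹ ((1:ℚ)/2) = 0 := by
    rw [show (1:ℚ)/2 = fP 0 from fP_zero.symm, Equiv.Perm.coe_inv, Equiv.symm_apply_apply]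
  rw [hexp, h1, h2, gP_zero, fP_quarter]
  norm_num

def PerQ : Subgroup (Equiv.Perm ℚ) where
  carrier := setOf PerPred
  one_mem' := PerPred.one
  mul_mem' := fun h1 h2 => PerPred.mul h1 h2
  inv_mem' := fun h => PerPred.inv h

noncomputable def rho : FreeGroup (Fin 2) →* Equiv.Perm ℚ :=
  PerQ.subtype.comp (FreeGroup.lift ![(⟨fP, fP_mem⟩ : PerQ), ⟨gP, gP_mem⟩])

lemma rho_mem (x : FreeGroup (Fin 2)) : PerPred (rho x) :=
  (FreeGroup.lift ![(⟨fP, fP_mem⟩ : PerQ), ⟨gP, gP_mem⟩] x).2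

lemma rho_c : rho ⁅FreeGroup.of (0 : Fin 2), FreeGroup.of (1 : Fin 2)⁆ = ⁅fP, gP⁆ := by
  rw [map_commutatorElement]
  congr 1 <;> simp [rho]

lemma perm_pow_val (h : Equiv.Perm ℚ) (hper : PerPred h) (hpt : h (3/8) = 3/8 + 1) :
    ∀ n : ℕ, (h ^ n) (3/8 : ℚ) = 3/8 + n := by
  intro n
  induction n with
  | zero => simp
  | succ n ih =>
      rw [pow_succ', Equiv.Perm.mul_apply, ih, hper.nat n (3/8), hpt]
      push_cast
      ring


lemma pow_is_prod_self {G : Type*} [Group G] (a b : G) (m : ℕ) :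
    IsProdOfCommutators (⁅a, b⁆ ^ m) m := by
  refine ⟨fun _ => (a, b), ?_⟩
  rw [List.ofFn_const, List.prod_replicate]

section Final

local notation "c₀" => (⁅FreeGroup.of (0 : Fin 2), FreeGroup.of (1 : Fin 2)⁆ : FreeGroup (Fin 2))

lemma lower_bound (m K : ℕ) (h : IsProdOfCommutators (c₀ ^ m) K) : m ≤ 2 * K := by
  obtain ⟨Fp, hFp⟩ := h
  have hc : PerPred (⁅fP, gP⁆ : Equiv.Perm ℚ) := by
    rw [← rho_c]; exact rho_mem _
  have hpt : (rho (c₀ ^ m)) (3/8 : ℚ) = 3/8 + m := by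
    rw [map_pow, rho_c]
    exact perm_pow_val _ hc comm_val m
  have h2 : rho (c₀ ^ m) =
      (List.ofFn fun i => (⁅rho (Fp i).1, rho (Fp i).2⁆ : Equiv.Perm ℚ)).prod := by
    rw [hFp, map_list_prod, List.map_ofFn]
    have hfe : (⇑rho ∘ fun i => ⁅(Fp i).1, (Fp i).2⁆) =
        fun i => (⁅rho (Fp i).1, rho (Fp i).2⁆ : Equiv.Perm ℚ) := by
      funext i
      simp [Function.comp, map_commutatorElement]
    rw [hfe]
  match K with
  | 0 =>
    simp only [List.ofFn_zero, List.prod_nil] at h2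
    rw [h2] at hpt
    simp only [Equiv.Perm.one_apply] at hpt
    have hq : (m : ℚ) = 0 := by linarith
    have : m = 0 := by exact_mod_cast hq
    omega
  | (K' + 1) =>
    obtain ⟨x, hx⟩ := prod_comm_bound K' (fun i => rho (Fp i).1) (fun i => rho (Fp i).2)
      (fun i => ⟨rho_mem _, rho_mem _⟩)
    have hlow := (rho_mem (c₀ ^ m)).osc_down (y₀ := 3/8) (c := (m : ℚ)) (le_of_eq hpt.symm) x
    rw [h2] at hlow
    have hq : (m : ℚ) < 2 * (K' + 1) + 1 := by linarith
    have hm : m < 2 * (K' + 1) + 1 := by exact_mod_cast hq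
    omega

lemma commLength_mem (m : ℕ) : IsProdOfCommutators (c₀ ^ m) (commLength (c₀ ^ m)) := by
  have hne : ∃ N, N ∈ {N | IsProdOfCommutators (c₀ ^ m) N} :=
    ⟨m, pow_is_prod_self (FreeGroup.of (0 : Fin 2)) (FreeGroup.of (1 : Fin 2)) m⟩
  exact Nat.sInf_mem hne

lemma commLength_lb (m : ℕ) : m ≤ 2 * commLength (c₀ ^ m) :=
  lower_bound m _ (commLength_mem m)

lemma commLength_ub (k : ℕ) : commLength (c₀ ^ (2 * k + 1)) ≤ k + 1 :=
  Nat.sInf_le (odd_pow_is_prod _ _ k)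

theorem free_group_scl_commutator :
    scl ⁅FreeGroup.of (0 : Fin 2), FreeGroup.of (1 : Fin 2)⁆ = 1 / 2 ∧
    0 < scl ⁅FreeGroup.of (0 : Fin 2), FreeGroup.of (1 : Fin 2)⁆ ∧
    ¬ ∃ N : ℕ, ∀ x : FreeGroup (Fin 2), x ∈ commutator (FreeGroup (Fin 2)) →
      ∃ m ≤ N, IsProdOfCommutators x m := by
  have hA_lb : ∀ n : ℕ, (1:ℝ)/2 ≤ (commLength (c₀ ^ (n + 1)) : ℝ) / (n + 1) := by
    intro n
    have h1 : (n + 1 : ℕ) ≤ 2 * commLength (c₀ ^ (n + 1)) := commLength_lb (n + 1)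
    have h2 : ((n:ℝ) + 1) ≤ 2 * (commLength (c₀ ^ (n + 1)) : ℝ) := by exact_mod_cast h1
    have hpos : (0:ℝ) < (n:ℝ) + 1 := by positivity
    rw [le_div_iff₀ hpos]
    linarith
  have hbdd : BddBelow (Set.range fun n : ℕ => (commLength (c₀ ^ (n + 1)) : ℝ) / (n + 1)) := by
    refine ⟨1/2, ?_⟩
    rintro y ⟨n, rfl⟩
    exact hA_lb n
  have hscl_ge : (1:ℝ)/2 ≤ scl c₀ := le_ciInf hA_lb
  have hscl_le : scl c₀ ≤ 1/2 := by
    by_contra hgt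
    push_neg at hgt
    have hεpos : 0 < scl c₀ - 1/2 := by linarith
    set ε : ℝ := scl c₀ - 1/2 with hε
    clear_value ε
    obtain ⟨n, hn⟩ := exists_nat_gt (1 / (2 * ε))
    have hub : scl c₀ ≤ (commLength (c₀ ^ (2 * n + 1)) : ℝ) / ((2 * n : ℕ) + 1) :=
      ciInf_le hbdd (2 * n)
    have hA2n : (commLength (c₀ ^ (2 * n + 1)) : ℝ) / ((2 * n : ℕ) + 1) ≤
        ((n:ℝ) + 1) / (2 * (n:ℝ) + 1) := by
      have h1 : commLength (c₀ ^ (2 * n + 1)) ≤ n + 1 := commLength_ub n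
      have h2 : (commLength (c₀ ^ (2 * n + 1)) : ℝ) ≤ (n:ℝ) + 1 := by exact_mod_cast h1
      have hpos : (0:ℝ) < 2 * (n:ℝ) + 1 := by positivity
      have hden : ((2 * n : ℕ) : ℝ) + 1 = 2 * (n:ℝ) + 1 := by push_cast; ring
      rw [hden]
      gcongr
    have h3 : (1:ℝ) < (n:ℝ) * (2 * ε) := by
      rw [div_lt_iff₀ (by positivity : (0:ℝ) < 2 * ε)] at hn
      linarith
    have hlt : ((n:ℝ) + 1) / (2 * (n:ℝ) + 1) < scl c₀ := by
      have hd : (0:ℝ) < 2 * (n:ℝ) + 1 := by positivity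
      have hscl : scl c₀ = 1/2 + ε := by rw [hε]; ring
      have hexp : (1/2 + ε) * (2 * (n:ℝ) + 1) = (n:ℝ) + 1/2 + (n:ℝ) * (2 * ε) + ε := by ring
      rw [div_lt_iff₀ hd, hscl, hexp]
      linarith
    linarith
  have heq : scl c₀ = 1/2 := le_antisymm hscl_le hscl_ge
  refine ⟨heq, by rw [heq]; norm_num, ?_⟩
  rintro ⟨N, hN⟩
  have h0 : c₀ ∈ commutator (FreeGroup (Fin 2)) := by
    rw [commutator_def]
    exact Subgroup.commutator_mem_commutator (Subgroup.mem_top _) (Subgroup.mem_top _)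
  have hmem : c₀ ^ (2 * N + 2) ∈ commutator (FreeGroup (Fin 2)) := pow_mem h0 _
  obtain ⟨m, hmN, hprod⟩ := hN _ hmem
  have := lower_bound (2 * N + 2) m hprod
  omega
end Final
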